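/- Let $\mathbf{c}$ be a moment vector with two representations $\mathbf{c} = \sum_{i=1}^p \lambda_i' \mathbf{u}(t_i') = \sum_{i=1}^q \lambda_i'' \mathbf{u}(t_i'')$ over a Chebyshev set $\{u_j\}_{j=0}^n$, both with positive weights and each of index at most $(n+2)/2$ (endpoints of $[a,b]$ counting one half). If the two point sets are not identical, then their points in the open interval $(a,b)$ strictly interlace: between any two consecutive interior points of one representation lies exactly one point of the other. -/

import Mathlib

namespace CanonInterlace

open Set Finset

variable {n : ℕ} {a b : ℝ} {u : Fin (n + 1) → ℝ → ℝ}

/-- point-evaluation matrix: rows are points, columns are the functions -/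
def Mm (u : Fin (n + 1) → ℝ → ℝ) (x : Fin (n + 1) → ℝ) :
    Matrix (Fin (n + 1)) (Fin (n + 1)) ℝ := Matrix.of fun i j => u j (x i)

/-- the Chebyshev-system hypothesis -/
def Cheb (a b : ℝ) (u : Fin (n + 1) → ℝ → ℝ) : Prop :=
  ∀ c : Fin (n + 1) → ℝ, c ≠ 0 →
      ∀ t : Fin (n + 1) → ℝ, StrictMono t → (∀ i, t i ∈ Set.Icc a b) →
        ¬ (∀ i, ∑ j, c j * u j (t i) = 0)
lemma det_ne_zero (hcheb : Cheb a b u) {x : Fin (n + 1) → ℝ}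
    (hx : StrictMono x) (hxm : ∀ i, x i ∈ Set.Icc a b) : (Mm u x).det ≠ 0 := by
  intro h
  obtain ⟨v, hv0, hv⟩ := Matrix.exists_mulVec_eq_zero_iff.2 h
  refine hcheb v hv0 x hx hxm fun i => ?_
  have := congrFun hv i
  simpa [Matrix.mulVec, dotProduct, Mm, mul_comm] using this

lemma vanish (hcheb : Cheb a b u) {x : Fin (n + 1) → ℝ}
    (hx : StrictMono x) (hxm : ∀ i, x i ∈ Set.Icc a b) {c : Fin (n + 1) → ℝ}
    (hc : ∀ j, ∑ i, c i * u j (x i) = 0) : c = 0 := by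
  apply Matrix.eq_zero_of_vecMul_eq_zero (det_ne_zero hcheb hx hxm)
  ext j
  simpa [Matrix.vecMul, dotProduct, Mm] using hc j

lemma det_mul_det_pos (hab : a < b) (hcont : ∀ j, ContinuousOn (u j) (Set.Icc a b))
    (hcheb : Cheb a b u) {x y : Fin (n + 1) → ℝ}
    (hx : StrictMono x) (hxm : ∀ i, x i ∈ Set.Icc a b)
    (hy : StrictMono y) (hym : ∀ i, y i ∈ Set.Icc a b) :
    0 < (Mm u x).det * (Mm u y).det := by
  set g : ℝ → Fin (n + 1) → ℝ := fun s i => (1 - s) * x i + s * y i with hg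
  have hmem : ∀ s ∈ Set.Icc (0:ℝ) 1, ∀ i, g s i ∈ Set.Icc a b := by
    intro s hs i
    have := (convex_Icc a b) (hxm i) (hym i)
      (by linarith [hs.2] : (0:ℝ) ≤ 1 - s) hs.1 (by ring)
    simpa [smul_eq_mul, hg] using this
  have hsm : ∀ s ∈ Set.Icc (0:ℝ) 1, StrictMono (g s) := by
    intro s hs i j hij
    have h1 := hx hij; have h2 := hy hij
    have h0 := hs.1; have h1' := hs.2
    simp only [hg]
    rcases eq_or_lt_of_le h1' with heq | hslt
    · subst heq; simpa using h2
    · nlinarith [mul_lt_mul_of_pos_left h1 (by linarith : (0:ℝ) < 1 - s),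
        mul_le_mul_of_nonneg_left h2.le h0]
  have hne : ∀ s ∈ Set.Icc (0:ℝ) 1, (Mm u (g s)).det ≠ 0 := fun s hs =>
    det_ne_zero hcheb (hsm s hs) (hmem s hs)
  have hcf : ContinuousOn (fun s => (Mm u (g s)).det) (Set.Icc 0 1) := by
    apply Continuous.comp_continuousOn (continuous_id.matrix_det)
    apply continuousOn_pi.2
    intro i
    apply continuousOn_pi.2
    intro j
    show ContinuousOn (fun s => u j (g s i)) (Set.Icc 0 1)
    apply (hcont j).comp
    · exact (Continuous.continuousOn (by continuity))
    · intro s hs; exact hmem s hs i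
  have hx0 : (Mm u (g 0)).det = (Mm u x).det := by simp [hg]
  have hy1 : (Mm u (g 1)).det = (Mm u y).det := by simp [hg]
  rcases lt_trichotomy ((Mm u x).det) 0 with hxneg | hx0' | hxpos
  · rcases lt_trichotomy ((Mm u y).det) 0 with hyneg | hy0' | hypos
    · nlinarith
    · exact absurd hy0' (det_ne_zero hcheb hy hym)
    · exfalso
      have h01 : (0:ℝ) ≤ 1 := by norm_num
      have : (0:ℝ) ∈ Set.Icc ((Mm u (g 0)).det) ((Mm u (g 1)).det) := by
        rw [hx0, hy1]; exact ⟨hxneg.le, hypos.le⟩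
      obtain ⟨s, hs, hs0⟩ := intermediate_value_Icc h01 hcf this
      exact hne s hs hs0
  · exact absurd hx0' (det_ne_zero hcheb hx hxm)
  · rcases lt_trichotomy ((Mm u y).det) 0 with hyneg | hy0' | hypos
    · exfalso
      have h01 : (0:ℝ) ≤ 1 := by norm_num
      have : (0:ℝ) ∈ Set.Icc ((Mm u (g 1)).det) ((Mm u (g 0)).det) := by
        rw [hx0, hy1]; exact ⟨hyneg.le, hxpos.le⟩
      obtain ⟨s, hs, hs0⟩ := intermediate_value_Icc' h01 hcf this
      exact hne s hs hs0
    · exact absurd hy0' (det_ne_zero hcheb hy hym)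
    · nlinarith
lemma sum_orderEmb {k : ℕ} (P : Finset ℝ) (h : P.card = k) (f : ℝ → ℝ) :
    ∑ i : Fin k, f (P.orderEmbOfFin h i) = ∑ x ∈ P, f x := by
  have himg : Finset.image (P.orderEmbOfFin h) Finset.univ = P := by
    apply Finset.coe_injective
    rw [Finset.coe_image, Finset.coe_univ, Set.image_univ]
    exact Finset.range_orderEmbOfFin P h
  conv_rhs => rw [← himg]
  exact (Finset.sum_image (fun x _ y _ hxy => (P.orderEmbOfFin h).injective hxy)).symm

lemma alt_chain {m : ℕ} (ν : Fin m → ℝ)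
    (halt : ∀ (i : ℕ) (h1 : i < m) (h2 : i + 1 < m), ν ⟨i, h1⟩ * ν ⟨i + 1, h2⟩ < 0)
    (h0 : 0 < m) (hν0 : ν ⟨0, h0⟩ ≠ 0) :
    ∀ (d : ℕ) (hd : d < m), 0 < (-1 : ℝ) ^ d * (ν ⟨0, h0⟩ * ν ⟨d, hd⟩) := by
  intro d
  induction d with
  | zero => intro hd; have := mul_self_pos.2 hν0; simpa using this
  | succ d ih =>
    intro hd
    have ih' := ih (by omega)
    have hstep := halt d (by omega) hd
    have hdne : ν ⟨d, by omega⟩ ≠ 0 := by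
      intro h; rw [h] at hstep; simp at hstep
    have hdsq : 0 < ν ⟨d, by omega⟩ * ν ⟨d, by omega⟩ := mul_self_pos.2 hdne
    have key := mul_pos ih' (neg_pos.2 hstep)
    rw [pow_succ]
    nlinarith [key, hdsq]
lemma annihilator_zero (hab : a < b) (hcheb : Cheb a b u) :
    ∀ (d : ℕ) (P : Finset ℝ), ↑P ⊆ Set.Icc a b → P.card + d = n + 1 →
      ∀ w : ℝ → ℝ, (∀ j, ∑ x ∈ P, w x * u j x = 0) → ∀ x ∈ P, w x = 0 := by
  intro d
  induction d with
  | zero =>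
    intro P hPsub hPcard w hann x hx
    have hcard : P.card = n + 1 := by omega
    set e := P.orderEmbOfFin hcard with he
    have hc : ∀ j, ∑ i, w (e i) * u j (e i) = 0 := by
      intro j
      rw [sum_orderEmb P hcard (fun x => w x * u j x)]
      exact hann j
    have hz := vanish hcheb (e.strictMono) (fun i => hPsub (Finset.orderEmbOfFin_mem P hcard i)) hc
    have : ∃ i, e i = x := by
      have : x ∈ Set.range e := by rw [Finset.range_orderEmbOfFin]; exact hx
      exact this
    obtain ⟨i, hi⟩ := this
    rw [← hi]
    exact congrFun hz i
  | succ d ih =>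
    intro P hPsub hPcard w hann x hx
    obtain ⟨y, hyIcc, hyP⟩ := (Set.Icc_infinite hab).exists_notMem_finset P
    set w' : ℝ → ℝ := fun z => if z = y then 0 else w z with hw'
    have hann' : ∀ j, ∑ z ∈ insert y P, w' z * u j z = 0 := by
      intro j
      rw [Finset.sum_insert hyP]
      have h1 : w' y = 0 := by simp [hw']
      have h2 : ∑ z ∈ P, w' z * u j z = ∑ z ∈ P, w z * u j z := by
        apply Finset.sum_congr rfl
        intro z hz
        have : z ≠ y := fun h => hyP (h ▸ hz)
        simp [hw', this]
      rw [h1, h2, hann j]; ring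
    have hsub' : ↑(insert y P) ⊆ Set.Icc a b := by
      rw [Finset.coe_insert]
      exact Set.insert_subset hyIcc hPsub
    have hcard' : (insert y P).card + d = n + 1 := by
      rw [Finset.card_insert_of_notMem hyP]; omega
    have := ih (insert y P) hsub' hcard' w' hann' x (Finset.mem_insert_of_mem hx)
    have hxy : x ≠ y := fun h => hyP (h ▸ hx)
    simpa [hw', hxy] using this
/-- alternating kernel vector on `n+2` points -/
def wv (u : Fin (n + 1) → ℝ → ℝ) (s : Fin (n + 2) → ℝ) : Fin (n + 2) → ℝ :=
  fun l => (-1 : ℝ) ^ (l : ℕ) * (Mm u (s ∘ l.succAbove)).det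

lemma wv_ann (s : Fin (n + 2) → ℝ) : ∀ j, ∑ l, wv u s l * u j (s l) = 0 := by
  intro j
  set A : Matrix (Fin (n + 2)) (Fin (n + 2)) ℝ :=
    Matrix.of fun k l => Fin.cases (u j (s l)) (fun r => u r (s l)) k with hA
  have hdup : A 0 = A (Fin.succ j) := by
    ext l; simp [hA]
  have hdet : A.det = 0 := Matrix.det_zero_of_row_eq (Fin.succ_ne_zero j).symm hdup
  have hexp := Matrix.det_succ_row_zero A
  rw [hdet] at hexp
  have hsub : ∀ l : Fin (n + 2),
      (A.submatrix Fin.succ l.succAbove).det = (Mm u (s ∘ l.succAbove)).det := by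
    intro l
    have : A.submatrix Fin.succ l.succAbove = (Mm u (s ∘ l.succAbove)).transpose := by
      ext k l'
      simp [hA, Mm, Matrix.transpose_apply, Matrix.submatrix_apply]
    rw [this, Matrix.det_transpose]
  calc ∑ l, wv u s l * u j (s l)
      = ∑ l : Fin (n + 2), (-1 : ℝ) ^ (l : ℕ) * A 0 l * (A.submatrix Fin.succ l.succAbove).det := by
        apply Finset.sum_congr rfl
        intro l _
        rw [hsub]
        have hA0 : A 0 l = u j (s l) := by simp [hA]
        rw [hA0]
        simp [wv]; ring
    _ = 0 := hexp.symm

lemma ann_eq_smul_wv (hcheb : Cheb a b u) {s : Fin (n + 2) → ℝ}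
    (hs : StrictMono s) (hsm : ∀ l, s l ∈ Set.Icc a b)
    {ν : Fin (n + 2) → ℝ} (hν : ∀ j, ∑ l, ν l * u j (s l) = 0) :
    ∃ cc : ℝ, ∀ l, ν l = cc * wv u s l := by
  have hw0 : wv u s 0 ≠ 0 := by
    have hd := det_ne_zero hcheb (hs.comp (Fin.strictMono_succAbove 0)) (fun i => hsm _)
    simpa [wv] using hd
  set cc := ν 0 / wv u s 0 with hcc
  refine ⟨cc, ?_⟩
  set μ : Fin (n + 2) → ℝ := fun l => ν l - cc * wv u s l with hμ
  have hμ0 : μ 0 = 0 := by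
    simp only [hμ, hcc]
    field_simp
    ring
  have hμann : ∀ j, ∑ i : Fin (n + 1), μ (Fin.succ i) * u j (s (Fin.succ i)) = 0 := by
    intro j
    have h1 : ∑ l, μ l * u j (s l) = 0 := by
      simp only [hμ, sub_mul]
      rw [Finset.sum_sub_distrib]
      have h2 : ∑ l, cc * wv u s l * u j (s l) = cc * ∑ l, wv u s l * u j (s l) := by
        rw [Finset.mul_sum]; apply Finset.sum_congr rfl; intro l _; ring
      rw [hν j, h2, wv_ann s j]; ring
    rw [Fin.sum_univ_succ, hμ0] at h1
    simpa using h1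
  have hz := vanish hcheb (hs.comp Fin.strictMono_succ) (fun i => hsm _)
    (c := fun i => μ (Fin.succ i)) hμann
  intro l
  have hμl : μ l = 0 := by
    induction l using Fin.cases with
    | zero => exact hμ0
    | succ i => exact congrFun hz i
  have := hμl
  simp only [hμ] at this
  linarith

def W1d (u : Fin (n + 1) → ℝ → ℝ) (s : Fin (n + 3) → ℝ) : Fin (n + 3) → ℝ :=
  Fin.cases 0 (wv u (s ∘ Fin.succ))

def W2d (u : Fin (n + 1) → ℝ → ℝ) (s : Fin (n + 3) → ℝ) : Fin (n + 3) → ℝ :=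
  Fin.snoc (wv u (s ∘ Fin.castSucc)) 0

lemma ann_decomp (hcheb : Cheb a b u) {s : Fin (n + 3) → ℝ}
    (hs : StrictMono s) (hsm : ∀ l, s l ∈ Set.Icc a b)
    {ν : Fin (n + 3) → ℝ} (hν : ∀ j, ∑ l, ν l * u j (s l) = 0) :
    ∃ α β : ℝ, ∀ l : Fin (n + 3),
      ν l = α * W1d u s l + β * W2d u s l := by
  set W1 : Fin (n + 3) → ℝ := W1d u s with hW1
  set W2 : Fin (n + 3) → ℝ := W2d u s with hW2
  have hW2ann : ∀ j, ∑ l, W2 l * u j (s l) = 0 := by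
    intro j
    rw [Fin.sum_univ_castSucc]
    have hlast : W2 (Fin.last (n + 2)) = 0 := by simp [hW2, W2d]
    have hcs : ∀ i : Fin (n + 2), W2 (Fin.castSucc i) = wv u (s ∘ Fin.castSucc) i := by
      intro i; simp [hW2, W2d]
    rw [hlast]
    have hwa := wv_ann (u := u) (s ∘ Fin.castSucc) j
    have heq : ∀ i : Fin (n + 2), W2 i.castSucc * u j (s i.castSucc)
        = wv u (s ∘ Fin.castSucc) i * u j ((s ∘ Fin.castSucc) i) := by
      intro i; rw [hcs i]; rfl
    rw [Finset.sum_congr rfl (fun i _ => heq i), hwa]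
    ring
  have hW2_0 : W2 0 ≠ 0 := by
    have hd := det_ne_zero hcheb
      ((hs.comp Fin.strictMono_castSucc).comp (Fin.strictMono_succAbove 0)) (fun i => hsm _)
    have : W2 0 = wv u (s ∘ Fin.castSucc) 0 := by
      show W2 (Fin.castSucc 0) = wv u (s ∘ Fin.castSucc) 0
      rw [hW2]
      unfold W2d
      exact Fin.snoc_castSucc _ _ 0
    rw [this]
    simpa [wv] using hd
  set β := ν 0 / W2 0 with hβ
  set μ : Fin (n + 3) → ℝ := fun l => ν l - β * W2 l with hμ
  have hμ0 : μ 0 = 0 := by simp only [hμ, hβ]; field_simp; ring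
  have hμann : ∀ j, ∑ i : Fin (n + 2), μ (Fin.succ i) * u j ((s ∘ Fin.succ) i) = 0 := by
    intro j
    have h1 : ∑ l, μ l * u j (s l) = 0 := by
      simp only [hμ, sub_mul]
      rw [Finset.sum_sub_distrib]
      have h2 : ∑ l, β * W2 l * u j (s l) = β * ∑ l, W2 l * u j (s l) := by
        rw [Finset.mul_sum]; apply Finset.sum_congr rfl; intro l _; ring
      rw [hν j, h2, hW2ann j]; ring
    rw [Fin.sum_univ_succ, hμ0] at h1
    simpa using h1
  obtain ⟨α, hα⟩ := ann_eq_smul_wv hcheb (hs.comp Fin.strictMono_succ) (fun i => hsm _) hμann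
  refine ⟨α, β, ?_⟩
  intro l
  induction l using Fin.cases with
  | zero =>
    have h0 : W1 0 = 0 := by simp [hW1, W1d]
    have : μ 0 = 0 := hμ0
    simp only [hμ] at this
    rw [h0]
    linarith
  | succ i =>
    have h1 : W1 (Fin.succ i) = wv u (s ∘ Fin.succ) i := by simp [hW1, W1d]
    have := hα i
    simp only [hμ] at this
    rw [h1]
    linarith
lemma endgame {a b : ℝ} {p q : ℕ} {t' : Fin p → ℝ} {t'' : Fin q → ℝ}
    (ht' : StrictMono t') (ht'' : StrictMono t'')
    {m : ℕ} {e : Fin m → ℝ} {ν : Fin m → ℝ} (he : StrictMono e)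
    (hsurj : ∀ x, x ∈ Set.range t' ∪ Set.range t'' → ∃ i, e i = x)
    (hmem : ∀ i, e i ∈ Set.range t' ∪ Set.range t'')
    (halt : ∀ (i : ℕ) (h1 : i < m) (h2 : i + 1 < m), ν ⟨i, h1⟩ * ν ⟨i + 1, h2⟩ < 0)
    (hT' : ∀ i : Fin m, e i ∈ Set.Ioo a b → (e i ∈ Set.range t' ↔ 0 < ν i))
    (hT'' : ∀ i : Fin m, e i ∈ Set.Ioo a b → (e i ∈ Set.range t'' ↔ ν i < 0)) :
    ∀ i : Fin p, ∀ h : (i : ℕ) + 1 < p,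
      t' i ∈ Set.Ioo a b → t' ⟨(i : ℕ) + 1, h⟩ ∈ Set.Ioo a b →
        ∃! k : Fin q, t'' k ∈ Set.Ioo (t' i) (t' ⟨(i : ℕ) + 1, h⟩) := by
  intro i h hx hy
  set x := t' i with hxdef
  set y := t' ⟨(i : ℕ) + 1, h⟩ with hydef
  have hxy : x < y := ht' (Fin.lt_def.2 (Nat.lt_succ_self _))
  obtain ⟨ix, hix⟩ := hsurj x (Or.inl ⟨i, rfl⟩)
  obtain ⟨iy, hiy⟩ := hsurj y (Or.inl ⟨⟨(i : ℕ) + 1, h⟩, rfl⟩)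
  have hlt : ix < iy := by
    apply he.lt_iff_lt.1
    rw [hix, hiy]; exact hxy
  have hνx : 0 < ν ix := by
    refine (hT' ix ?_).1 ?_
    · rw [hix]; exact hx
    · rw [hix]; exact ⟨i, rfl⟩
  have hνy : 0 < ν iy := by
    refine (hT' iy ?_).1 ?_
    · rw [hiy]; exact hy
    · rw [hiy]; exact ⟨⟨(i : ℕ) + 1, h⟩, rfl⟩
  have hbetween : ∀ j : Fin m, ix < j → j < iy → (e j ∈ Set.Ioo x y ∧ ν j < 0) := by
    intro j hj1 hj2
    have hxj : x < e j := by rw [← hix]; exact he hj1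
    have hjy : e j < y := by rw [← hiy]; exact he hj2
    have hIoo : e j ∈ Set.Ioo a b := ⟨lt_trans hx.1 hxj, lt_trans hjy hy.2⟩
    have hnot' : e j ∉ Set.range t' := by
      rintro ⟨k, hk⟩
      have h1 : (i : Fin p) < k := ht'.lt_iff_lt.1 (by rw [hk]; exact hxj)
      have h2 : k < (⟨(i : ℕ) + 1, h⟩ : Fin p) := ht'.lt_iff_lt.1 (by rw [hk]; exact hjy)
      have v1 : (i : ℕ) < (k : ℕ) := h1
      have v2 : (k : ℕ) < (i : ℕ) + 1 := h2
      omega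
    have : e j ∈ Set.range t'' := (hmem j).resolve_left hnot'
    exact ⟨⟨hxj, hjy⟩, (hT'' j hIoo).1 this⟩
  have hstep : (ix : ℕ) + 1 < (iy : ℕ) := by
    rcases Nat.lt_or_ge ((ix : ℕ) + 1) (iy : ℕ) with h' | h'
    · exact h'
    · exfalso
      have : (iy : ℕ) = (ix : ℕ) + 1 := by
        have := (Fin.lt_def).1 hlt; omega
      have hcontra := halt (ix : ℕ) ix.isLt (by rw [← this]; exact iy.isLt)
      have e1 : (⟨(ix : ℕ), ix.isLt⟩ : Fin m) = ix := rfl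
      have e2 : (⟨(ix : ℕ) + 1, by rw [← this]; exact iy.isLt⟩ : Fin m) = iy :=
        Fin.ext this.symm
      rw [e1, e2] at hcontra
      nlinarith
  have hj0lt : (ix : ℕ) + 1 < m := lt_trans hstep iy.isLt
  set j0 : Fin m := ⟨(ix : ℕ) + 1, hj0lt⟩ with hj0
  have hj0b := hbetween j0 (Fin.lt_def.2 (Nat.lt_succ_self _)) (Fin.lt_def.2 hstep)
  have hiy2 : (iy : ℕ) = (ix : ℕ) + 2 := by
    by_contra hcon
    have h3 : (ix : ℕ) + 2 < (iy : ℕ) := by omega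
    have hj1b := hbetween ⟨(ix : ℕ) + 2, lt_trans h3 iy.isLt⟩
      (Fin.lt_def.2 (show (ix : ℕ) < (ix : ℕ) + 2 by omega)) (Fin.lt_def.2 h3)
    have hcontra := halt ((ix : ℕ) + 1) hj0lt (lt_trans h3 iy.isLt)
    nlinarith [hj0b.2, hj1b.2]
  have hIoo0 : e j0 ∈ Set.Ioo a b := ⟨lt_trans hx.1 hj0b.1.1, lt_trans hj0b.1.2 hy.2⟩
  obtain ⟨k, hk⟩ := (hT'' j0 hIoo0).2 hj0b.2
  refine ⟨k, by show t'' k ∈ Set.Ioo x y; rw [hk]; exact hj0b.1, ?_⟩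
  intro k' hk'
  obtain ⟨j', hj'⟩ := hsurj (t'' k') (Or.inr ⟨k', rfl⟩)
  have hj'1 : ix < j' := he.lt_iff_lt.1 (by rw [hix, hj']; exact hk'.1)
  have hj'2 : j' < iy := he.lt_iff_lt.1 (by rw [hiy, hj']; exact hk'.2)
  have v1 : (ix : ℕ) < (j' : ℕ) := hj'1
  have v2 : (j' : ℕ) < (iy : ℕ) := hj'2
  have hval : (j' : ℕ) = (ix : ℕ) + 1 := by omega
  have hj'eq : j' = j0 := Fin.ext hval
  apply ht''.injective
  rw [hk, ← hj', hj'eq]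
lemma parity_pos {nn pp : ℕ} (Ea Eb : ℕ) (ν0 νl : ℝ)
    (h2p : 2 * pp = nn + 2 + Ea + Eb)
    (hEa : (Ea = 1 ∧ 0 < ν0) ∨ (Ea = 0 ∧ ν0 < 0))
    (hEb : (Eb = 1 ∧ 0 < νl) ∨ (Eb = 0 ∧ νl < 0)) :
    0 < ν0 * νl * (-1 : ℝ) ^ nn := by
  rcases hEa with ⟨hE, h0⟩ | ⟨hE, h0⟩ <;> rcases hEb with ⟨hF, hl⟩ | ⟨hF, hl⟩ <;>
    subst hE <;> subst hF
  · have hev : Even nn := Nat.even_iff.2 (by omega)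
    rw [hev.neg_one_pow]; nlinarith
  · have hod : Odd nn := Nat.odd_iff.2 (by omega)
    rw [hod.neg_one_pow]; nlinarith
  · have hod : Odd nn := Nat.odd_iff.2 (by omega)
    rw [hod.neg_one_pow]; nlinarith
  · have hev : Even nn := Nat.even_iff.2 (by omega)
    rw [hev.neg_one_pow]; nlinarith

set_option maxHeartbeats 2000000 in
open Classical in
lemma key {n : ℕ} {a b : ℝ} (hab : a < b) {u : Fin (n + 1) → ℝ → ℝ}
    (hcont : ∀ j, ContinuousOn (u j) (Set.Icc a b))
    (hcheb : Cheb a b u)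
    (c : Fin (n + 1) → ℝ)
    {p q : ℕ} (hp : 0 < p) (hq : 0 < q)
    (t' : Fin p → ℝ) (lam' : Fin p → ℝ) (t'' : Fin q → ℝ) (lam'' : Fin q → ℝ)
    (ht' : StrictMono t') (ht'ab : ∀ i, t' i ∈ Set.Icc a b)
    (ht'' : StrictMono t'') (ht''ab : ∀ i, t'' i ∈ Set.Icc a b)
    (hlam' : ∀ i, 0 < lam' i) (hlam'' : ∀ i, 0 < lam'' i)
    (hrep' : ∀ j, c j = ∑ i, lam' i * u j (t' i))
    (hrep'' : ∀ j, c j = ∑ i, lam'' i * u j (t'' i))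
    (hidx' : 2 * p ≤ n + 2 + (if a ∈ Set.range t' then 1 else 0)
        + (if b ∈ Set.range t' then 1 else 0))
    (hidx'' : 2 * q ≤ n + 2 + (if a ∈ Set.range t'' then 1 else 0)
        + (if b ∈ Set.range t'' then 1 else 0))
    (hne : Set.range t' ≠ Set.range t'') :
    ∀ i : Fin p, ∀ h : (i : ℕ) + 1 < p,
      t' i ∈ Set.Ioo a b → t' ⟨(i : ℕ) + 1, h⟩ ∈ Set.Ioo a b →
        ∃! k : Fin q, t'' k ∈ Set.Ioo (t' i) (t' ⟨(i : ℕ) + 1, h⟩) := by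
  classical
  set F' : Finset ℝ := Finset.image t' Finset.univ with hF'
  set F'' : Finset ℝ := Finset.image t'' Finset.univ with hF''
  have hmemF' : ∀ x : ℝ, x ∈ F' ↔ x ∈ Set.range t' := by
    intro x; simp [hF', Set.mem_range, eq_comm]
  have hmemF'' : ∀ x : ℝ, x ∈ F'' ↔ x ∈ Set.range t'' := by
    intro x; simp [hF'', Set.mem_range, eq_comm]
  set S : Finset ℝ := F' ∪ F'' with hS
  set m : ℕ := S.card with hmdef
  set e := S.orderEmbOfFin hmdef.symm with hedef
  have hpcard : F'.card = p := by
    rw [hF', Finset.card_image_of_injective _ ht'.injective, Finset.card_univ,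
      Fintype.card_fin]
  have hqcard : F''.card = q := by
    rw [hF'', Finset.card_image_of_injective _ ht''.injective, Finset.card_univ,
      Fintype.card_fin]
  have hcards : m + (F' ∩ F'').card = p + q := by
    rw [hmdef, ← hpcard, ← hqcard, hS]
    exact Finset.card_union_add_card_inter F' F''
  set lamF : ℝ → ℝ := fun x => ∑ k, if t' k = x then lam' k else 0 with hlamF
  set lamG : ℝ → ℝ := fun x => ∑ k, if t'' k = x then lam'' k else 0 with hlamG
  have hlamF_at : ∀ k, lamF (t' k) = lam' k := by
    intro k
    show (∑ k' : Fin p, if t' k' = t' k then lam' k' else 0) = lam' k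
    rw [Finset.sum_eq_single k]
    · simp
    · intro k' _ hk'
      simp [ht'.injective.ne hk']
    · intro h; exact absurd (Finset.mem_univ k) h
  have hlamG_at : ∀ k, lamG (t'' k) = lam'' k := by
    intro k
    show (∑ k' : Fin q, if t'' k' = t'' k then lam'' k' else 0) = lam'' k
    rw [Finset.sum_eq_single k]
    · simp
    · intro k' _ hk'
      simp [ht''.injective.ne hk']
    · intro h; exact absurd (Finset.mem_univ k) h
  have hlamF_zero : ∀ x, x ∉ Set.range t' → lamF x = 0 := by
    intro x hx
    show (∑ k : Fin p, if t' k = x then lam' k else 0) = 0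
    apply Finset.sum_eq_zero; intro k _
    have : t' k ≠ x := fun h => hx ⟨k, h⟩
    simp [this]
  have hlamG_zero : ∀ x, x ∉ Set.range t'' → lamG x = 0 := by
    intro x hx
    show (∑ k : Fin q, if t'' k = x then lam'' k else 0) = 0
    apply Finset.sum_eq_zero; intro k _
    have : t'' k ≠ x := fun h => hx ⟨k, h⟩
    simp [this]
  set ν : Fin m → ℝ := fun i => lamF (e i) - lamG (e i) with hνdef
  have hsum' : ∀ j, ∑ x ∈ S, lamF x * u j x = c j := by
    intro j
    rw [← Finset.sum_subset (Finset.subset_union_left : F' ⊆ S)]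
    · rw [hF', Finset.sum_image (fun x _ y _ hxy => ht'.injective hxy), hrep' j]
      apply Finset.sum_congr rfl
      intro k _; rw [hlamF_at k]
    · intro x _ hx
      rw [hlamF_zero x (fun hr => hx ((hmemF' x).2 hr))]
      ring
  have hsum'' : ∀ j, ∑ x ∈ S, lamG x * u j x = c j := by
    intro j
    rw [← Finset.sum_subset (Finset.subset_union_right : F'' ⊆ S)]
    · rw [hF'', Finset.sum_image (fun x _ y _ hxy => ht''.injective hxy), hrep'' j]
      apply Finset.sum_congr rfl
      intro k _; rw [hlamG_at k]
    · intro x _ hx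
      rw [hlamG_zero x (fun hr => hx ((hmemF'' x).2 hr))]
      ring
  have hannS : ∀ j, ∑ x ∈ S, (lamF x - lamG x) * u j x = 0 := by
    intro j
    simp only [sub_mul]
    rw [Finset.sum_sub_distrib, hsum' j, hsum'' j, sub_self]
  have hann : ∀ j, ∑ i : Fin m, ν i * u j (e i) = 0 := by
    intro j
    rw [show (∑ i : Fin m, ν i * u j (e i))
        = ∑ i : Fin m, (fun x => (lamF x - lamG x) * u j x) (e i) from rfl]
    rw [sum_orderEmb S hmdef.symm (fun x => (lamF x - lamG x) * u j x)]
    exact hannS j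
  have hSicc : ∀ x ∈ S, x ∈ Set.Icc a b := by
    intro x hx
    rw [hS, Finset.mem_union] at hx
    rcases hx with h | h
    · obtain ⟨k, hk⟩ := (hmemF' _).1 h; rw [← hk]; exact ht'ab k
    · obtain ⟨k, hk⟩ := (hmemF'' _).1 h; rw [← hk]; exact ht''ab k
  have hemem : ∀ i, (e i : ℝ) ∈ S := fun i => Finset.orderEmbOfFin_mem S hmdef.symm i
  have heIcc : ∀ i, (e i : ℝ) ∈ Set.Icc a b := fun i => hSicc _ (hemem i)
  have hsurjS : ∀ x ∈ S, ∃ i, e i = x := by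
    intro x hx
    have : x ∈ Set.range e := by rw [Finset.range_orderEmbOfFin]; exact hx
    exact this
  have hSrange : ∀ i, (e i : ℝ) ∈ Set.range t' ∪ Set.range t'' := by
    intro i
    have := hemem i
    rw [hS, Finset.mem_union] at this
    rcases this with h | h
    · exact Or.inl ((hmemF' _).1 h)
    · exact Or.inr ((hmemF'' _).1 h)
  have hν_pos : ∀ i, (e i : ℝ) ∉ Set.range t'' → 0 < ν i := by
    intro i hi
    have h' : (e i : ℝ) ∈ Set.range t' := (hSrange i).resolve_right hi
    obtain ⟨k, hk⟩ := h'
    show 0 < lamF (e i) - lamG (e i)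
    rw [hlamG_zero _ hi, ← hk, hlamF_at]
    simpa using hlam' k
  have hν_neg : ∀ i, (e i : ℝ) ∉ Set.range t' → ν i < 0 := by
    intro i hi
    have h' : (e i : ℝ) ∈ Set.range t'' := (hSrange i).resolve_left hi
    obtain ⟨k, hk⟩ := h'
    show lamF (e i) - lamG (e i) < 0
    rw [hlamF_zero _ hi, ← hk, hlamG_at]
    simpa using hlam'' k
  have hν_ne : ∃ i, ν i ≠ 0 := by
    have hnotall : ¬ (∀ x, x ∈ Set.range t' ↔ x ∈ Set.range t'') :=
      fun h => hne (Set.ext h)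
    obtain ⟨x, hx⟩ := not_forall.1 hnotall
    by_cases hP : x ∈ Set.range t'
    · have hQ : x ∉ Set.range t'' := fun hq => hx ⟨fun _ => hq, fun _ => hP⟩
      obtain ⟨i, hi⟩ := hsurjS x (by
        rw [hS, Finset.mem_union]; exact Or.inl ((hmemF' x).2 hP))
      exact ⟨i, ne_of_gt (hν_pos i (by rw [hi]; exact hQ))⟩
    · have hQ : x ∈ Set.range t'' := by
        by_contra hq
        exact hx ⟨fun h => absurd h hP, fun h => absurd h hq⟩
      obtain ⟨i, hi⟩ := hsurjS x (by
        rw [hS, Finset.mem_union]; exact Or.inr ((hmemF'' x).2 hQ))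
      exact ⟨i, ne_of_lt (hν_neg i (by rw [hi]; exact hP))⟩
  -- index bookkeeping
  set r : ℕ := (F' ∩ F'').card with hrdef
  set Ea' : ℕ := if a ∈ Set.range t' then 1 else 0 with hEa'
  set Eb' : ℕ := if b ∈ Set.range t' then 1 else 0 with hEb'
  set Ea'' : ℕ := if a ∈ Set.range t'' then 1 else 0 with hEa''
  set Eb'' : ℕ := if b ∈ Set.range t'' then 1 else 0 with hEb''
  set Ia : ℕ := if a ∈ F' ∩ F'' then 1 else 0 with hIa
  set Ib : ℕ := if b ∈ F' ∩ F'' then 1 else 0 with hIb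
  have hlka : Ea' + Ea'' ≤ 1 + Ia := by
    by_cases h1 : a ∈ Set.range t' <;> by_cases h2 : a ∈ Set.range t''
    · have hm' : a ∈ F' ∩ F'' :=
        Finset.mem_inter.2 ⟨(hmemF' a).2 h1, (hmemF'' a).2 h2⟩
      simp [hEa', hEa'', hIa, h1, h2, hm']
    · simp only [hEa', hEa'', if_pos h1, if_neg h2]; omega
    · simp only [hEa', hEa'', if_neg h1, if_pos h2]; omega
    · simp only [hEa', hEa'', if_neg h1, if_neg h2]; omega
  have hlkb : Eb' + Eb'' ≤ 1 + Ib := by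
    by_cases h1 : b ∈ Set.range t' <;> by_cases h2 : b ∈ Set.range t''
    · have hm' : b ∈ F' ∩ F'' :=
        Finset.mem_inter.2 ⟨(hmemF' b).2 h1, (hmemF'' b).2 h2⟩
      simp [hEb', hEb'', hIb, h1, h2, hm']
    · simp only [hEb', hEb'', if_pos h1, if_neg h2]; omega
    · simp only [hEb', hEb'', if_neg h1, if_pos h2]; omega
    · simp only [hEb', hEb'', if_neg h1, if_neg h2]; omega
  have hlkr : Ia + Ib ≤ r := by
    by_cases h1 : a ∈ F' ∩ F'' <;> by_cases h2 : b ∈ F' ∩ F''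
    · have hsub : ({a, b} : Finset ℝ) ⊆ F' ∩ F'' := by
        intro z hz
        rcases Finset.mem_insert.1 hz with rfl | hz
        · exact h1
        · rw [Finset.mem_singleton] at hz; rw [hz]; exact h2
      have hcard2 : ({a, b} : Finset ℝ).card = 2 := by
        rw [Finset.card_insert_of_notMem (by simp [hab.ne]), Finset.card_singleton]
      have hle := Finset.card_le_card hsub
      rw [hcard2, ← hrdef] at hle
      simp only [hIa, hIb, if_pos h1, if_pos h2]; omega
    · have hle : 1 ≤ r := by
        rw [hrdef]; exact Finset.card_pos.2 ⟨a, h1⟩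
      simp only [hIa, hIb, if_pos h1, if_neg h2]; omega
    · have hle : 1 ≤ r := by
        rw [hrdef]; exact Finset.card_pos.2 ⟨b, h2⟩
      simp only [hIa, hIb, if_neg h1, if_pos h2]; omega
    · simp only [hIa, hIb, if_neg h1, if_neg h2]; omega
  have hm_low : n + 2 ≤ m := by
    by_contra hcon
    push_neg at hcon
    obtain ⟨i0, hi0⟩ := hν_ne
    have hz := annihilator_zero hab hcheb (n + 1 - m) S hSicc (by omega)
      (fun x => lamF x - lamG x) hannS (e i0) (hemem i0)
    exact hi0 hz
  have hdich : m = n + 2 ∨ m = n + 3 := by omega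
  clear_value m
  rcases hdich with hA | hB
  · -- m = n + 2
    subst hA
    obtain ⟨cc, hcc⟩ := ann_eq_smul_wv hcheb e.strictMono heIcc hann
    have hccne : cc ≠ 0 := by
      obtain ⟨i0, hi0⟩ := hν_ne
      intro h0
      apply hi0
      rw [hcc i0, h0]; ring
    have haltm : ∀ (l : ℕ) (h1 : l < n + 2) (h2 : l + 1 < n + 2),
        ν ⟨l, h1⟩ * ν ⟨l + 1, h2⟩ < 0 := by
      intro l h1 h2
      have hw : wv u (⇑e) ⟨l, h1⟩ * wv u (⇑e) ⟨l + 1, h2⟩ < 0 := by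
        have hD := det_mul_det_pos hab hcont hcheb
          (e.strictMono.comp (Fin.strictMono_succAbove ⟨l, h1⟩)) (fun i => heIcc _)
          (e.strictMono.comp (Fin.strictMono_succAbove ⟨l + 1, h2⟩)) (fun i => heIcc _)
        have hpw : (-1 : ℝ) ^ l * (-1 : ℝ) ^ (l + 1) = -1 := by
          rw [← pow_add]
          exact Odd.neg_one_pow ⟨l, by ring⟩
        have hre : wv u (⇑e) ⟨l, h1⟩ * wv u (⇑e) ⟨l + 1, h2⟩
            = ((-1 : ℝ) ^ l * (-1 : ℝ) ^ (l + 1)) *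
              ((Mm u (⇑e ∘ Fin.succAbove ⟨l, h1⟩)).det *
               (Mm u (⇑e ∘ Fin.succAbove ⟨l + 1, h2⟩)).det) := by
          show ((-1 : ℝ) ^ l * _) * ((-1 : ℝ) ^ (l + 1) * _) = _
          ring
        rw [hre, hpw]
        nlinarith [hD]
      rw [hcc ⟨l, h1⟩, hcc ⟨l + 1, h2⟩]
      nlinarith [hw, mul_self_pos.2 hccne]
    have hNIC : ∀ i : Fin (n + 2), (e i : ℝ) ∈ Set.Ioo a b →
        ¬((e i : ℝ) ∈ Set.range t' ∧ (e i : ℝ) ∈ Set.range t'') := by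
      rintro i hIoo ⟨hi1, hi2⟩
      have hcm : (e i : ℝ) ∈ F' ∩ F'' :=
        Finset.mem_inter.2 ⟨(hmemF' _).2 hi1, (hmemF'' _).2 hi2⟩
      have hia : (e i : ℝ) ≠ a := ne_of_gt hIoo.1
      have hib : (e i : ℝ) ≠ b := ne_of_lt hIoo.2
      have hr1 : Ia + Ib + 1 ≤ r := by
        by_cases h1 : a ∈ F' ∩ F'' <;> by_cases h2 : b ∈ F' ∩ F''
        · have hsub : ({a, b, (e i : ℝ)} : Finset ℝ) ⊆ F' ∩ F'' := by
            intro z hz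
            simp only [Finset.mem_insert, Finset.mem_singleton] at hz
            rcases hz with rfl | rfl | rfl
            exacts [h1, h2, hcm]
          have hc3 : ({a, b, (e i : ℝ)} : Finset ℝ).card = 3 := by
            rw [Finset.card_insert_of_notMem (by
              simp only [Finset.mem_insert, Finset.mem_singleton]
              push_neg
              exact ⟨hab.ne, Ne.symm hia⟩),
              Finset.card_insert_of_notMem (by
                simp only [Finset.mem_singleton]
                exact Ne.symm hib),
              Finset.card_singleton]
          have hle := Finset.card_le_card hsub
          rw [hc3, ← hrdef] at hle
          simp only [hIa, hIb, if_pos h1, if_pos h2]; omega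
        · have hsub : ({a, (e i : ℝ)} : Finset ℝ) ⊆ F' ∩ F'' := by
            intro z hz
            simp only [Finset.mem_insert, Finset.mem_singleton] at hz
            rcases hz with rfl | rfl
            exacts [h1, hcm]
          have hc2 : ({a, (e i : ℝ)} : Finset ℝ).card = 2 := by
            rw [Finset.card_insert_of_notMem (by
              simp only [Finset.mem_singleton]; exact Ne.symm hia),
              Finset.card_singleton]
          have hle := Finset.card_le_card hsub
          rw [hc2, ← hrdef] at hle
          simp only [hIa, hIb, if_pos h1, if_neg h2]; omega
        · have hsub : ({b, (e i : ℝ)} : Finset ℝ) ⊆ F' ∩ F'' := by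
            intro z hz
            simp only [Finset.mem_insert, Finset.mem_singleton] at hz
            rcases hz with rfl | rfl
            exacts [h2, hcm]
          have hc2 : ({b, (e i : ℝ)} : Finset ℝ).card = 2 := by
            rw [Finset.card_insert_of_notMem (by
              simp only [Finset.mem_singleton]; exact Ne.symm hib),
              Finset.card_singleton]
          have hle := Finset.card_le_card hsub
          rw [hc2, ← hrdef] at hle
          simp only [hIa, hIb, if_neg h1, if_pos h2]; omega
        · have hsub : ({(e i : ℝ)} : Finset ℝ) ⊆ F' ∩ F'' := by
            intro z hz; rw [Finset.mem_singleton] at hz; rw [hz]; exact hcm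
          have hle := Finset.card_le_card hsub
          rw [Finset.card_singleton, ← hrdef] at hle
          simp only [hIa, hIb, if_neg h1, if_neg h2]; omega
      have h2peq : 2 * p = n + 2 + Ea' + Eb' := by omega
      have hEsa : Ea' + Ea'' = 1 := by omega
      have hEsb : Eb' + Eb'' = 1 := by omega
      have haS : a ∈ S := by
        by_cases h1 : a ∈ Set.range t'
        · rw [hS, Finset.mem_union]; exact Or.inl ((hmemF' a).2 h1)
        · have h2 : a ∈ Set.range t'' := by
            by_contra h2
            simp only [hEa', hEa'', if_neg h1, if_neg h2] at hEsa
            omega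
          rw [hS, Finset.mem_union]; exact Or.inr ((hmemF'' a).2 h2)
      have hbS : b ∈ S := by
        by_cases h1 : b ∈ Set.range t'
        · rw [hS, Finset.mem_union]; exact Or.inl ((hmemF' b).2 h1)
        · have h2 : b ∈ Set.range t'' := by
            by_contra h2
            simp only [hEb', hEb'', if_neg h1, if_neg h2] at hEsb
            omega
          rw [hS, Finset.mem_union]; exact Or.inr ((hmemF'' b).2 h2)
      have hm0 : 0 < n + 2 := by omega
      have hml : n + 1 < n + 2 := by omega
      have he0 : (e ⟨0, hm0⟩ : ℝ) = a := by
        obtain ⟨j', hj'⟩ := hsurjS a haS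
        have h1 : a ≤ e ⟨0, hm0⟩ := (heIcc _).1
        have h2 : (e ⟨0, hm0⟩ : ℝ) ≤ e j' := e.monotone (by
          rw [Fin.le_def]
          show (0 : ℕ) ≤ (j' : ℕ)
          omega)
        rw [hj'] at h2
        linarith
      have hel : (e ⟨n + 1, hml⟩ : ℝ) = b := by
        obtain ⟨j', hj'⟩ := hsurjS b hbS
        have h1 : (e ⟨n + 1, hml⟩ : ℝ) ≤ b := (heIcc _).2
        have h2 : (e j' : ℝ) ≤ e ⟨n + 1, hml⟩ := e.monotone (by
          rw [Fin.le_def]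
          show (j' : ℕ) ≤ n + 1
          have := j'.isLt
          omega)
        rw [hj'] at h2
        linarith
      have hsignA : (Ea' = 1 ∧ 0 < ν ⟨0, hm0⟩) ∨ (Ea' = 0 ∧ ν ⟨0, hm0⟩ < 0) := by
        by_cases h1 : a ∈ Set.range t'
        · left
          refine ⟨by simp [hEa', h1], ?_⟩
          have h2 : a ∉ Set.range t'' := by
            intro h2
            simp only [hEa', hEa'', if_pos h1, if_pos h2] at hEsa; omega
          exact hν_pos _ (by rw [he0]; exact h2)
        · right
          exact ⟨by simp [hEa', h1], hν_neg _ (by rw [he0]; exact h1)⟩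
      have hsignB : (Eb' = 1 ∧ 0 < ν ⟨n + 1, hml⟩) ∨ (Eb' = 0 ∧ ν ⟨n + 1, hml⟩ < 0) := by
        by_cases h1 : b ∈ Set.range t'
        · left
          refine ⟨by simp [hEb', h1], ?_⟩
          have h2 : b ∉ Set.range t'' := by
            intro h2
            simp only [hEb', hEb'', if_pos h1, if_pos h2] at hEsb; omega
          exact hν_pos _ (by rw [hel]; exact h2)
        · right
          exact ⟨by simp [hEb', h1], hν_neg _ (by rw [hel]; exact h1)⟩
      have hν0ne : ν ⟨0, hm0⟩ ≠ 0 := by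
        rcases hsignA with ⟨_, h⟩ | ⟨_, h⟩
        exacts [ne_of_gt h, ne_of_lt h]
      have hends := alt_chain ν haltm hm0 hν0ne (n + 1) hml
      have hpar := parity_pos Ea' Eb' (ν ⟨0, hm0⟩) (ν ⟨n + 1, hml⟩) h2peq hsignA hsignB
      have hneg : (-1 : ℝ) ^ (n + 1) * (-1 : ℝ) ^ n = -1 := by
        rw [← pow_add]
        exact Odd.neg_one_pow ⟨n, by ring⟩
      have hXX := mul_pos hends hpar
      rw [show ((-1 : ℝ) ^ (n + 1) * (ν ⟨0, hm0⟩ * ν ⟨n + 1, hml⟩)) *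
          (ν ⟨0, hm0⟩ * ν ⟨n + 1, hml⟩ * (-1 : ℝ) ^ n)
          = ((-1 : ℝ) ^ (n + 1) * (-1 : ℝ) ^ n) *
            ((ν ⟨0, hm0⟩ * ν ⟨n + 1, hml⟩) * (ν ⟨0, hm0⟩ * ν ⟨n + 1, hml⟩)) from by ring,
        hneg] at hXX
      nlinarith [hXX, mul_self_nonneg (ν ⟨0, hm0⟩ * ν ⟨n + 1, hml⟩)]
    have hT'iff : ∀ i : Fin (n + 2), (e i : ℝ) ∈ Set.Ioo a b →
        ((e i : ℝ) ∈ Set.range t' ↔ 0 < ν i) := by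
      intro i hIoo
      constructor
      · intro h1
        exact hν_pos i (fun h2 => hNIC i hIoo ⟨h1, h2⟩)
      · intro h1
        by_contra h2
        have := hν_neg i h2
        linarith
    have hT''iff : ∀ i : Fin (n + 2), (e i : ℝ) ∈ Set.Ioo a b →
        ((e i : ℝ) ∈ Set.range t'' ↔ ν i < 0) := by
      intro i hIoo
      constructor
      · intro h1
        by_contra h2
        push_neg at h2
        have h3 : (e i : ℝ) ∈ Set.range t' := by
          by_contra h3
          have := hν_neg i h3
          linarith
        exact hNIC i hIoo ⟨h3, h1⟩
      · intro h1
        by_contra h2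
        have := hν_pos i h2
        linarith
    have hsurjU : ∀ x, x ∈ Set.range t' ∪ Set.range t'' → ∃ i, (e i : ℝ) = x := by
      intro x hx
      apply hsurjS
      rw [hS, Finset.mem_union]
      rcases hx with h | h
      · exact Or.inl ((hmemF' x).2 h)
      · exact Or.inr ((hmemF'' x).2 h)
    exact endgame ht' ht'' e.strictMono hsurjU hSrange haltm hT'iff hT''iff
  · -- m = n + 3
    subst hB
    have hr0 : r = 0 := by omega
    have hInt0 : F' ∩ F'' = ∅ := Finset.card_eq_zero.1 (by rw [← hrdef]; exact hr0)
    have hdisj : ∀ x : ℝ, ¬(x ∈ Set.range t' ∧ x ∈ Set.range t'') := by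
      rintro x ⟨h1, h2⟩
      have : x ∈ F' ∩ F'' := Finset.mem_inter.2 ⟨(hmemF' x).2 h1, (hmemF'' x).2 h2⟩
      rw [hInt0] at this
      exact absurd this (Finset.notMem_empty x)
    have hIa0 : Ia = 0 := by
      simp only [hIa, hInt0]
      simp
    have hIb0 : Ib = 0 := by
      simp only [hIb, hInt0]
      simp
    have h2peq : 2 * p = n + 2 + Ea' + Eb' := by omega
    have hEsa : Ea' + Ea'' = 1 := by omega
    have hEsb : Eb' + Eb'' = 1 := by omega
    have haS : a ∈ S := by
      by_cases h1 : a ∈ Set.range t'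
      · rw [hS, Finset.mem_union]; exact Or.inl ((hmemF' a).2 h1)
      · have h2 : a ∈ Set.range t'' := by
          by_contra h2
          simp only [hEa', hEa'', if_neg h1, if_neg h2] at hEsa
          omega
        rw [hS, Finset.mem_union]; exact Or.inr ((hmemF'' a).2 h2)
    have hbS : b ∈ S := by
      by_cases h1 : b ∈ Set.range t'
      · rw [hS, Finset.mem_union]; exact Or.inl ((hmemF' b).2 h1)
      · have h2 : b ∈ Set.range t'' := by
          by_contra h2
          simp only [hEb', hEb'', if_neg h1, if_neg h2] at hEsb
          omega
        rw [hS, Finset.mem_union]; exact Or.inr ((hmemF'' b).2 h2)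
    have hm0 : 0 < n + 3 := by omega
    have hml : n + 2 < n + 3 := by omega
    have he0 : (e ⟨0, hm0⟩ : ℝ) = a := by
      obtain ⟨j', hj'⟩ := hsurjS a haS
      have h1 : a ≤ e ⟨0, hm0⟩ := (heIcc _).1
      have h2 : (e ⟨0, hm0⟩ : ℝ) ≤ e j' := e.monotone (by
        rw [Fin.le_def]
        show (0 : ℕ) ≤ (j' : ℕ)
        omega)
      rw [hj'] at h2
      linarith
    have hel : (e ⟨n + 2, hml⟩ : ℝ) = b := by
      obtain ⟨j', hj'⟩ := hsurjS b hbS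
      have h1 : (e ⟨n + 2, hml⟩ : ℝ) ≤ b := (heIcc _).2
      have h2 : (e j' : ℝ) ≤ e ⟨n + 2, hml⟩ := e.monotone (by
        rw [Fin.le_def]
        show (j' : ℕ) ≤ n + 2
        have := j'.isLt
        omega)
      rw [hj'] at h2
      linarith
    have hsignA : (Ea' = 1 ∧ 0 < ν ⟨0, hm0⟩) ∨ (Ea' = 0 ∧ ν ⟨0, hm0⟩ < 0) := by
      by_cases h1 : a ∈ Set.range t'
      · left
        refine ⟨by simp [hEa', h1], ?_⟩
        exact hν_pos _ (by rw [he0]; exact fun h2 => hdisj a ⟨h1, h2⟩)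
      · right
        exact ⟨by simp [hEa', h1], hν_neg _ (by rw [he0]; exact h1)⟩
    have hsignB : (Eb' = 1 ∧ 0 < ν ⟨n + 2, hml⟩) ∨ (Eb' = 0 ∧ ν ⟨n + 2, hml⟩ < 0) := by
      by_cases h1 : b ∈ Set.range t'
      · left
        refine ⟨by simp [hEb', h1], ?_⟩
        exact hν_pos _ (by rw [hel]; exact fun h2 => hdisj b ⟨h1, h2⟩)
      · right
        exact ⟨by simp [hEb', h1], hν_neg _ (by rw [hel]; exact h1)⟩
    have hν0ne : ν ⟨0, hm0⟩ ≠ 0 := by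
      rcases hsignA with ⟨_, h⟩ | ⟨_, h⟩
      exacts [ne_of_gt h, ne_of_lt h]
    have hpar := parity_pos Ea' Eb' (ν ⟨0, hm0⟩) (ν ⟨n + 2, hml⟩) h2peq hsignA hsignB
    -- decomposition
    obtain ⟨α, β, hdc⟩ := ann_decomp hcheb e.strictMono heIcc hann
    have hW10 : W1d u (⇑e) 0 = 0 := rfl
    have hW2last : W2d u (⇑e) (Fin.last (n + 2)) = 0 := by
      unfold W2d
      exact Fin.snoc_last _ _
    set P2 : ℝ := (Mm u ((⇑e ∘ Fin.castSucc) ∘ Fin.succAbove 0)).det with hP2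
    set P1 : ℝ := (Mm u ((⇑e ∘ Fin.succ) ∘ Fin.succAbove (Fin.last (n + 1)))).det with hP1
    have hW20 : W2d u (⇑e) 0 = P2 := by
      show W2d u (⇑e) (Fin.castSucc 0) = P2
      unfold W2d
      rw [Fin.snoc_castSucc]
      show (-1 : ℝ) ^ ((0 : Fin (n + 2)) : ℕ) *
        (Mm u ((⇑e ∘ Fin.castSucc) ∘ Fin.succAbove (0 : Fin (n + 2)))).det = P2
      rw [Fin.val_zero, pow_zero, one_mul, hP2]
    have hW1l : W1d u (⇑e) (Fin.last (n + 2)) = (-1 : ℝ) ^ (n + 1) * P1 := by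
      show W1d u (⇑e) (Fin.succ (Fin.last (n + 1))) = _
      unfold W1d
      rw [Fin.cases_succ]
      show (-1 : ℝ) ^ ((Fin.last (n + 1) : Fin (n + 2)) : ℕ) * _ = _
      rw [Fin.val_last]
    have hlast_eq : (⟨n + 2, hml⟩ : Fin (n + 3)) = Fin.last (n + 2) := rfl
    have h00 : ν ⟨0, hm0⟩ = β * P2 := by
      rw [hdc ⟨0, hm0⟩, show (⟨0, hm0⟩ : Fin (n + 3)) = 0 from rfl, hW10, hW20]; ring
    have hll : ν ⟨n + 2, hml⟩ = α * ((-1 : ℝ) ^ (n + 1) * P1) := by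
      rw [hdc ⟨n + 2, hml⟩, hlast_eq, hW2last, hW1l]; ring
    have hP2P1 : 0 < P2 * P1 := by
      rw [hP2, hP1]
      exact det_mul_det_pos hab hcont hcheb
        ((e.strictMono.comp Fin.strictMono_castSucc).comp (Fin.strictMono_succAbove 0))
        (fun i => heIcc _)
        ((e.strictMono.comp Fin.strictMono_succ).comp (Fin.strictMono_succAbove (Fin.last (n + 1))))
        (fun i => heIcc _)
    have hneg : (-1 : ℝ) ^ (n + 1) * (-1 : ℝ) ^ n = -1 := by
      rw [← pow_add]
      exact Odd.neg_one_pow ⟨n, by ring⟩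
    rw [h00, hll] at hpar
    rw [show (β * P2) * (α * ((-1 : ℝ) ^ (n + 1) * P1)) * (-1 : ℝ) ^ n
        = ((-1 : ℝ) ^ (n + 1) * (-1 : ℝ) ^ n) * ((α * β) * (P2 * P1)) from by ring,
      hneg] at hpar
    have hαβ : α * β < 0 := by nlinarith [hpar, hP2P1]
    have hβne : β ≠ 0 := by
      intro h0
      rw [h00, h0] at hν0ne
      simp at hν0ne
    have hβsq : 0 < β * β := mul_self_pos.2 hβne
    -- term positivity
    have hterm2 : ∀ l : Fin (n + 3),
        0 ≤ (-1 : ℝ) ^ (l : ℕ) * W2d u (⇑e) l * P2 ∧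
        ((l : ℕ) < n + 2 → 0 < (-1 : ℝ) ^ (l : ℕ) * W2d u (⇑e) l * P2) := by
      intro l
      induction l using Fin.lastCases with
      | last =>
        rw [hW2last]
        constructor
        · simp
        · intro hcon
          rw [Fin.val_last] at hcon
          omega
      | cast i =>
        have hW2c : W2d u (⇑e) (Fin.castSucc i) = wv u (⇑e ∘ Fin.castSucc) i := by
          unfold W2d
          exact Fin.snoc_castSucc _ _ i
        have hD : 0 < (Mm u ((⇑e ∘ Fin.castSucc) ∘ Fin.succAbove i)).det * P2 := by
          rw [hP2]
          exact det_mul_det_pos hab hcont hcheb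
            ((e.strictMono.comp Fin.strictMono_castSucc).comp (Fin.strictMono_succAbove i))
            (fun _ => heIcc _)
            ((e.strictMono.comp Fin.strictMono_castSucc).comp (Fin.strictMono_succAbove 0))
            (fun _ => heIcc _)
        have hsq : (-1 : ℝ) ^ (i : ℕ) * (-1 : ℝ) ^ (i : ℕ) = 1 := by
          rw [← pow_add]
          exact Even.neg_one_pow ⟨(i : ℕ), by ring⟩
        have hval : (-1 : ℝ) ^ ((Fin.castSucc i : Fin (n + 3)) : ℕ) * W2d u (⇑e) (Fin.castSucc i) * P2
            = ((-1 : ℝ) ^ (i : ℕ) * (-1 : ℝ) ^ (i : ℕ)) *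
              ((Mm u ((⇑e ∘ Fin.castSucc) ∘ Fin.succAbove i)).det * P2) := by
          rw [hW2c]
          show (-1 : ℝ) ^ (i : ℕ) * ((-1 : ℝ) ^ (i : ℕ) * _) * P2 = _
          ring
        rw [hval, hsq, one_mul]
        exact ⟨le_of_lt hD, fun _ => hD⟩
    have hterm1 : ∀ l : Fin (n + 3),
        0 ≤ -((-1 : ℝ) ^ (l : ℕ) * W1d u (⇑e) l) * P2 ∧
        (0 < (l : ℕ) → 0 < -((-1 : ℝ) ^ (l : ℕ) * W1d u (⇑e) l) * P2) := by
      intro l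
      induction l using Fin.cases with
      | zero =>
        rw [hW10]
        constructor
        · simp
        · intro hcon; simp at hcon
      | succ i =>
        have hW1s : W1d u (⇑e) (Fin.succ i) = wv u (⇑e ∘ Fin.succ) i := by
          unfold W1d
          exact Fin.cases_succ i
        have hD : 0 < (Mm u ((⇑e ∘ Fin.succ) ∘ Fin.succAbove i)).det * P2 := by
          rw [hP2]
          exact det_mul_det_pos hab hcont hcheb
            ((e.strictMono.comp Fin.strictMono_succ).comp (Fin.strictMono_succAbove i))
            (fun _ => heIcc _)
            ((e.strictMono.comp Fin.strictMono_castSucc).comp (Fin.strictMono_succAbove 0))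
            (fun _ => heIcc _)
        have hsq : (-1 : ℝ) ^ (i : ℕ) * (-1 : ℝ) ^ (i : ℕ) = 1 := by
          rw [← pow_add]
          exact Even.neg_one_pow ⟨(i : ℕ), by ring⟩
        have hval : -((-1 : ℝ) ^ ((Fin.succ i : Fin (n + 3)) : ℕ) * W1d u (⇑e) (Fin.succ i)) * P2
            = ((-1 : ℝ) ^ (i : ℕ) * (-1 : ℝ) ^ (i : ℕ)) *
              ((Mm u ((⇑e ∘ Fin.succ) ∘ Fin.succAbove i)).det * P2) := by
          rw [hW1s]
          show -((-1 : ℝ) ^ ((i : ℕ) + 1) * ((-1 : ℝ) ^ (i : ℕ) * _)) * P2 = _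
          rw [pow_succ]
          ring
        rw [hval, hsq, one_mul]
        exact ⟨le_of_lt hD, fun _ => hD⟩
    have hkey : ∀ l : Fin (n + 3), 0 < β * ((-1 : ℝ) ^ (l : ℕ) * ν l) * P2 := by
      intro l
      have hdcl := hdc l
      have h2 := hterm2 l
      have h1 := hterm1 l
      rw [hdcl]
      rcases Nat.eq_zero_or_pos (l : ℕ) with h0 | h0
      · have h2s := h2.2 (by omega)
        nlinarith [mul_pos hβsq h2s, mul_nonneg (le_of_lt (neg_pos.2 hαβ)) h1.1]
      · have h1s := h1.2 h0
        nlinarith [mul_nonneg (le_of_lt hβsq) h2.1, mul_pos (neg_pos.2 hαβ) h1s]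
    have haltm : ∀ (l : ℕ) (h1 : l < n + 3) (h2 : l + 1 < n + 3),
        ν ⟨l, h1⟩ * ν ⟨l + 1, h2⟩ < 0 := by
      intro l h1 h2
      have k1 := hkey ⟨l, h1⟩
      have k2 := hkey ⟨l + 1, h2⟩
      have hprod := mul_pos k1 k2
      have hsq : (-1 : ℝ) ^ l * (-1 : ℝ) ^ l = 1 := by
        rw [← pow_add]
        exact Even.neg_one_pow ⟨l, by ring⟩
      rw [show (β * ((-1 : ℝ) ^ ((⟨l, h1⟩ : Fin (n + 3)) : ℕ) * ν ⟨l, h1⟩) * P2) *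
          (β * ((-1 : ℝ) ^ ((⟨l + 1, h2⟩ : Fin (n + 3)) : ℕ) * ν ⟨l + 1, h2⟩) * P2)
          = -(((-1 : ℝ) ^ l * (-1 : ℝ) ^ l) * ((β * P2) * (β * P2)) *
            (ν ⟨l, h1⟩ * ν ⟨l + 1, h2⟩)) from by
        show (β * ((-1 : ℝ) ^ l * _) * P2) * (β * ((-1 : ℝ) ^ (l + 1) * _) * P2) = _
        rw [pow_succ]
        ring, hsq] at hprod
      nlinarith [hprod, mul_self_nonneg (β * P2)]
    have hT'iff : ∀ i : Fin (n + 3), (e i : ℝ) ∈ Set.Ioo a b →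
        ((e i : ℝ) ∈ Set.range t' ↔ 0 < ν i) := by
      intro i _
      constructor
      · intro h1
        exact hν_pos i (fun h2 => hdisj _ ⟨h1, h2⟩)
      · intro h1
        by_contra h2
        have := hν_neg i h2
        linarith
    have hT''iff : ∀ i : Fin (n + 3), (e i : ℝ) ∈ Set.Ioo a b →
        ((e i : ℝ) ∈ Set.range t'' ↔ ν i < 0) := by
      intro i _
      constructor
      · intro h1
        by_contra h2
        push_neg at h2
        have h3 : (e i : ℝ) ∈ Set.range t' := by
          by_contra h3
          have := hν_neg i h3
          linarith
        exact hdisj _ ⟨h3, h1⟩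
      · intro h1
        by_contra h2
        have := hν_pos i h2
        linarith
    have hsurjU : ∀ x, x ∈ Set.range t' ∪ Set.range t'' → ∃ i, (e i : ℝ) = x := by
      intro x hx
      apply hsurjS
      rw [hS, Finset.mem_union]
      rcases hx with h | h
      · exact Or.inl ((hmemF' x).2 h)
      · exact Or.inr ((hmemF'' x).2 h)
    exact endgame ht' ht'' e.strictMono hsurjU hSrange haltm hT'iff hT''iff

end CanonInterlace

open Classical in
/-- Interlacing of canonical representations: if two distinct positive-weight
representations of the same moment vector over a Chebyshev set both have index
at most `(n+2)/2` (an endpoint of `[a,b]` counting one half), then their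
interior points strictly interlace: between two consecutive interior points of
one representation lies exactly one point of the other. -/
theorem canonical_representations_interlace
    (n : ℕ) (a b : ℝ) (hab : a < b) (u : Fin (n + 1) → ℝ → ℝ)
    (hcont : ∀ j, ContinuousOn (u j) (Set.Icc a b))
    (hcheb : ∀ c : Fin (n + 1) → ℝ, c ≠ 0 →
      ∀ t : Fin (n + 1) → ℝ, StrictMono t → (∀ i, t i ∈ Set.Icc a b) →
        ¬ (∀ i, ∑ j, c j * u j (t i) = 0))
    (c : Fin (n + 1) → ℝ)
    (p q : ℕ) (hp : 0 < p) (hq : 0 < q)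
    (t' : Fin p → ℝ) (lam' : Fin p → ℝ)
    (t'' : Fin q → ℝ) (lam'' : Fin q → ℝ)
    (ht' : StrictMono t') (ht'ab : ∀ i, t' i ∈ Set.Icc a b)
    (ht'' : StrictMono t'') (ht''ab : ∀ i, t'' i ∈ Set.Icc a b)
    (hlam' : ∀ i, 0 < lam' i) (hlam'' : ∀ i, 0 < lam'' i)
    (hrep' : ∀ j, c j = ∑ i, lam' i * u j (t' i))
    (hrep'' : ∀ j, c j = ∑ i, lam'' i * u j (t'' i))
    -- index of each representation is at most (n+2)/2, endpoints counting 1/2: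
    (hidx' : 2 * p ≤ n + 2 + (if a ∈ Set.range t' then 1 else 0)
        + (if b ∈ Set.range t' then 1 else 0))
    (hidx'' : 2 * q ≤ n + 2 + (if a ∈ Set.range t'' then 1 else 0)
        + (if b ∈ Set.range t'' then 1 else 0))
    (hne : Set.range t' ≠ Set.range t'') :
    (∀ i : Fin p, ∀ h : (i : ℕ) + 1 < p,
      t' i ∈ Set.Ioo a b → t' ⟨(i : ℕ) + 1, h⟩ ∈ Set.Ioo a b →
        ∃! k : Fin q, t'' k ∈ Set.Ioo (t' i) (t' ⟨(i : ℕ) + 1, h⟩)) ∧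
    (∀ i : Fin q, ∀ h : (i : ℕ) + 1 < q,
      t'' i ∈ Set.Ioo a b → t'' ⟨(i : ℕ) + 1, h⟩ ∈ Set.Ioo a b →
        ∃! k : Fin p, t' k ∈ Set.Ioo (t'' i) (t'' ⟨(i : ℕ) + 1, h⟩)) := by
  constructor
  · exact CanonInterlace.key hab hcont hcheb c hp hq t' lam' t'' lam'' ht' ht'ab ht'' ht''ab
      hlam' hlam'' hrep' hrep'' hidx' hidx'' hne
  · exact CanonInterlace.key hab hcont hcheb c hq hp t'' lam'' t' lam' ht'' ht''ab ht' ht'ab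
      hlam'' hlam' hrep'' hrep' hidx'' hidx' hne.symm
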